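/- Let U : X → ℝ with ∫_X e^{-U(x)} dx = 1, σ > 0, and let G, G' : X → ℝ be measurable with |G(x)|, |G'(x)| ≤ C for all x. Define Z = ∫ exp(-(2/σ²)G - U) dx, Z' = ∫ exp(-(2/σ²)G' - U) dx, Ψ(x) = Z^{-1} exp(-(2/σ²)G(x) - U(x)), Ψ'(x) = (Z')^{-1} exp(-(2/σ²)G'(x) - U(x)). If ‖G - G'‖_∞ ≤ ε, then for all x, |Ψ(x) - Ψ'(x)| ≤ L e^{-U(x)} ε, where L = (2/σ²) exp(4C/σ²)(1 + exp(4C/σ²)). -/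
import Mathlib


open MeasureTheory Real

private lemma exp_lip_aux {a b M : ℝ} (ha : a ≤ M) (hb : b ≤ M) :
    |Real.exp a - Real.exp b| ≤ Real.exp M * |a - b| := by
  wlog h : b ≤ a generalizing a b
  · rw [abs_sub_comm, abs_sub_comm a b]; exact this hb ha (le_of_not_ge h)
  rw [abs_of_nonneg (sub_nonneg.2 (Real.exp_le_exp.2 h)), abs_of_nonneg (sub_nonneg.2 h)]
  have h1 := Real.add_one_le_exp (b - a)
  have h2 : Real.exp a ≤ Real.exp M := Real.exp_le_exp.2 ha
  have h3 : Real.exp a - Real.exp b = Real.exp a * (1 - Real.exp (b - a)) := by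
    rw [mul_sub, mul_one, ← Real.exp_add]; ring_nf
  nlinarith [Real.exp_pos a, Real.exp_pos (b - a)]

/-- Pointwise Lipschitz continuity of the Gibbs density with respect to
uniform perturbations of the potential, with explicit constant. -/
theorem gibbs_density_lipschitz
    {X : Type*} [MeasurableSpace X] (μ : Measure X)
    (U G G' : X → ℝ) (hU : Measurable U) (hG : Measurable G) (hG' : Measurable G')
    (hUint : Integrable (fun x => exp (-U x)) μ)
    (hUprob : ∫ x, exp (-U x) ∂μ = 1)
    (C σ ε : ℝ) (hC : 0 < C) (hσ : 0 < σ) (hε : 0 ≤ ε)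
    (hGbdd : ∀ x, |G x| ≤ C) (hG'bdd : ∀ x, |G' x| ≤ C)
    (hclose : ∀ x, |G x - G' x| ≤ ε) :
    ∀ x, |(∫ z, exp (-(2 / σ ^ 2) * G z - U z) ∂μ)⁻¹ * exp (-(2 / σ ^ 2) * G x - U x)
          - (∫ z, exp (-(2 / σ ^ 2) * G' z - U z) ∂μ)⁻¹ * exp (-(2 / σ ^ 2) * G' x - U x)|
        ≤ (2 / σ ^ 2) * exp (4 * C / σ ^ 2) * (1 + exp (4 * C / σ ^ 2))
            * exp (-U x) * ε := by
  set β : ℝ := 2 / σ ^ 2 with hβdef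
  have hβ : 0 < β := by positivity
  set K : ℝ := exp (β * C) with hKdef
  have hK0 : 0 < K := Real.exp_pos _
  -- pointwise upper bound on integrands
  have hbound : ∀ (H : X → ℝ), (∀ z, |H z| ≤ C) → ∀ z,
      exp (-β * H z - U z) ≤ K * exp (-U z) := by
    intro H hb z
    rw [sub_eq_add_neg, Real.exp_add, hKdef]
    have h1 : exp (-β * H z) ≤ exp (β * C) := by
      rw [Real.exp_le_exp]
      have := (abs_le.1 (hb z)).1
      nlinarith
    exact mul_le_mul_of_nonneg_right h1 (Real.exp_pos _).le
  -- pointwise lower bound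
  have hlbound : ∀ (H : X → ℝ), (∀ z, |H z| ≤ C) → ∀ z,
      K⁻¹ * exp (-U z) ≤ exp (-β * H z - U z) := by
    intro H hb z
    rw [hKdef, ← Real.exp_neg, ← Real.exp_add, sub_eq_add_neg, Real.exp_le_exp]
    have := (abs_le.1 (hb z)).2
    nlinarith
  -- integrability
  have hint : ∀ (H : X → ℝ), Measurable H → (∀ z, |H z| ≤ C) →
      Integrable (fun z => exp (-β * H z - U z)) μ := by
    intro H hm hb
    refine (hUint.const_mul K).mono' ?_ (ae_of_all _ fun z => ?_)
    · exact (((hm.const_mul (-β)).sub hU).exp).aestronglyMeasurable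
    · rw [Real.norm_eq_abs, abs_of_nonneg (Real.exp_pos _).le]
      exact hbound H hb z
  have hintG := hint G hG hGbdd
  have hintG' := hint G' hG' hG'bdd
  -- bounds on the normalizing constants
  have hZlb : ∀ (H : X → ℝ), Measurable H → (∀ z, |H z| ≤ C) →
      K⁻¹ ≤ ∫ z, exp (-β * H z - U z) ∂μ := by
    intro H hm hb
    have : K⁻¹ = ∫ z, K⁻¹ * exp (-U z) ∂μ := by
      rw [integral_const_mul, hUprob, mul_one]
    rw [this]
    exact integral_mono (hUint.const_mul _) (hint H hm hb) (hlbound H hb)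
  have hZub : ∀ (H : X → ℝ), Measurable H → (∀ z, |H z| ≤ C) →
      (∫ z, exp (-β * H z - U z) ∂μ) ≤ K := by
    intro H hm hb
    have : K = ∫ z, K * exp (-U z) ∂μ := by
      rw [integral_const_mul, hUprob, mul_one]
    rw [this]
    exact integral_mono (hint H hm hb) (hUint.const_mul _) (hbound H hb)
  -- pointwise difference bound
  have hpt : ∀ z, |exp (-β * G z - U z) - exp (-β * G' z - U z)|
      ≤ K * (β * ε) * exp (-U z) := by
    intro z
    rw [sub_eq_add_neg (-β * G z), sub_eq_add_neg (-β * G' z), Real.exp_add, Real.exp_add,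
      ← sub_mul, abs_mul, abs_of_nonneg (Real.exp_pos (-U z)).le]
    gcongr
    have hGle : -β * G z ≤ β * C := by
      have := (abs_le.1 (hGbdd z)).1; nlinarith
    have hG'le : -β * G' z ≤ β * C := by
      have := (abs_le.1 (hG'bdd z)).1; nlinarith
    calc |exp (-β * G z) - exp (-β * G' z)| ≤ K * |(-β * G z) - (-β * G' z)| :=
          exp_lip_aux hGle hG'le
      _ = K * (β * |G z - G' z|) := by
          rw [show (-β * G z) - (-β * G' z) = -(β * (G z - G' z)) by ring, abs_neg, abs_mul,
            abs_of_pos hβ]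
      _ ≤ K * (β * ε) := by gcongr; exact hclose z
  -- difference of normalizing constants
  have hZdiff : |(∫ z, exp (-β * G z - U z) ∂μ) - ∫ z, exp (-β * G' z - U z) ∂μ|
      ≤ K * (β * ε) := by
    rw [← integral_sub hintG hintG']
    calc |∫ z, (exp (-β * G z - U z) - exp (-β * G' z - U z)) ∂μ|
        ≤ ∫ z, |exp (-β * G z - U z) - exp (-β * G' z - U z)| ∂μ := by
          simpa [Real.norm_eq_abs] using
            norm_integral_le_integral_norm
              (fun z => exp (-β * G z - U z) - exp (-β * G' z - U z)) (μ := μ)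
      _ ≤ ∫ z, K * (β * ε) * exp (-U z) ∂μ :=
          integral_mono (hintG.sub hintG').abs (hUint.const_mul _) hpt
      _ = K * (β * ε) := by rw [integral_const_mul, hUprob, mul_one]
  intro x
  set Z : ℝ := ∫ z, exp (-β * G z - U z) ∂μ with hZdef
  set Z' : ℝ := ∫ z, exp (-β * G' z - U z) ∂μ with hZ'def
  have hZpos : 0 < Z := lt_of_lt_of_le (by positivity) (hZlb G hG hGbdd)
  have hZ'pos : 0 < Z' := lt_of_lt_of_le (by positivity) (hZlb G' hG' hG'bdd)
  have hZinv : Z⁻¹ ≤ K := by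
    calc Z⁻¹ ≤ (K⁻¹)⁻¹ := inv_anti₀ (by positivity) (hZlb G hG hGbdd)
      _ = K := inv_inv K
  have hZ'inv : Z'⁻¹ ≤ K := by
    calc Z'⁻¹ ≤ (K⁻¹)⁻¹ := inv_anti₀ (by positivity) (hZlb G' hG' hG'bdd)
      _ = K := inv_inv K
  set A : ℝ := exp (-β * G x - U x) with hAdef
  set A' : ℝ := exp (-β * G' x - U x) with hA'def
  have hA'ub : A' ≤ K * exp (-U x) := hbound G' hG'bdd x
  have hidentity : Z⁻¹ * A - Z'⁻¹ * A' = Z⁻¹ * (A - A') + Z⁻¹ * Z'⁻¹ * (Z' - Z) * A' := by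
    field_simp
    ring
  have hK2 : exp (4 * C / σ ^ 2) = K ^ 2 := by
    rw [hKdef, pow_two (rexp (β * C)), ← Real.exp_add, hβdef]
    congr 1
    field_simp
    ring
  rw [hK2]
  calc |Z⁻¹ * A - Z'⁻¹ * A'|
      = |Z⁻¹ * (A - A') + Z⁻¹ * Z'⁻¹ * (Z' - Z) * A'| := by rw [hidentity]
    _ ≤ |Z⁻¹ * (A - A')| + |Z⁻¹ * Z'⁻¹ * (Z' - Z) * A'| := abs_add_le _ _
    _ = Z⁻¹ * |A - A'| + Z⁻¹ * Z'⁻¹ * |Z' - Z| * A' := by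
        rw [abs_mul, abs_mul, abs_mul, abs_mul, abs_of_pos (inv_pos.2 hZpos),
          abs_of_pos (inv_pos.2 hZ'pos), abs_of_pos (Real.exp_pos _)]
    _ ≤ K * (K * (β * ε) * exp (-U x)) + K * K * (K * (β * ε)) * (K * exp (-U x)) := by
        gcongr
        · exact hpt x
        · rw [abs_sub_comm]; exact hZdiff
    _ ≤ β * K ^ 2 * (1 + K ^ 2) * exp (-U x) * ε := by nlinarith [Real.exp_pos (-U x)]
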